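/- Let q be a complex number with |q| ≠ 1, A even, r ≥ 1, A > 2r, and define S̃_n(q) = (q;q)_n^{A−2r} ∑_{k≥1} (1−q^{2k+n}) (q^{k−rn};q)_{rn} (q^{k+n+1};q)_{rn} / (q^k;q)_{n+1}^A · q^{k(A−2r)n/2 + kA/2 − k}. Then S̃_n(1/q) = −q^{n(r−1)} S̃_n(q). -/

import Mathlib

/-- The very-well-poised series
`S̃_n(q) = (q;q)_n^{A−2r} ∑_{k≥1} (1−q^{2k+n}) (q^{k−rn};q)_{rn} (q^{k+n+1};q)_{rn}
            / (q^k;q)_{n+1}^A · q^{k((A−2r)n/2 + A/2 − 1)}`. -/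
noncomputable def St19 (A r n : ℕ) (x : ℂ) : ℂ :=
  (∏ i ∈ Finset.range n, (1 - x ^ (i + 1))) ^ (A - 2 * r) *
    ∑' k : ℕ,
      (1 - x ^ (2 * (k + 1) + n)) *
        (∏ i ∈ Finset.range (r * n), (1 - x ^ (((k : ℤ) + 1) - r * n + i))) *
        (∏ i ∈ Finset.range (r * n), (1 - x ^ (k + 1 + n + 1 + i))) /
        (∏ i ∈ Finset.range (n + 1), (1 - x ^ (k + 1 + i))) ^ A *
        x ^ ((k + 1) * ((A - 2 * r) * n / 2 + A / 2 - 1))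

lemma flipZ (q : ℂ) (hq : q ≠ 0) (e : ℤ) :
    1 - q⁻¹ ^ e = -q ^ (-e) * (1 - q ^ e) := by
  rw [inv_zpow, ← zpow_neg]
  have h : q ^ (-e) * q ^ e = 1 := by rw [← zpow_add₀ hq]; simp
  linear_combination -h

lemma prod_flipZ (q : ℂ) (hq : q ≠ 0) (m : ℕ) (f : ℕ → ℤ) :
    ∏ i ∈ Finset.range m, (1 - q⁻¹ ^ f i)
      = (-1) ^ m * q ^ (-∑ i ∈ Finset.range m, f i) * ∏ i ∈ Finset.range m, (1 - q ^ f i) := by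
  induction m with
  | zero => simp
  | succ m ih =>
      rw [Finset.prod_range_succ, ih, Finset.sum_range_succ, Finset.prod_range_succ,
        flipZ q hq, neg_add, zpow_add₀ hq, pow_succ]
      ring

lemma prod_flipN (q : ℂ) (hq : q ≠ 0) (m : ℕ) (f : ℕ → ℕ) :
    ∏ i ∈ Finset.range m, (1 - q⁻¹ ^ f i)
      = (-1) ^ m * q ^ (-∑ i ∈ Finset.range m, (f i : ℤ)) * ∏ i ∈ Finset.range m, (1 - q ^ f i) := by
  have := prod_flipZ q hq m (fun i => (f i : ℤ))
  simpa [zpow_natCast] using this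

lemma flipN (q : ℂ) (hq : q ≠ 0) (m : ℕ) :
    1 - q⁻¹ ^ m = -q ^ (-(m : ℤ)) * (1 - q ^ m) := by
  simpa [zpow_natCast] using flipZ q hq m

lemma gauss (m : ℕ) (c : ℤ) : 2 * ∑ i ∈ Finset.range m, (c + i) = 2 * m * c + m * (m - 1) := by
  induction m with
  | zero => simp
  | succ m ih =>
      rw [Finset.sum_range_succ, mul_add]
      push_cast
      push_cast at ih
      linarith

lemma alg0 (q c0 P1 P2 D Pn : ℂ) (hq : q ≠ 0) (B E : ℕ)
    (e0 e1 e2 e3 en K R : ℤ)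
    (hexp : R + K = -en * E - e0 - e1 - e2 + e3 * B - K) :
    (q ^ (-en) * Pn) ^ E *
      (-(q ^ (-e0) * c0) * (q ^ (-e1) * P1) * (q ^ (-e2) * P2) /
        (q ^ (-e3) * D) ^ B * q ^ (-K))
    = -q ^ R * Pn ^ E * (c0 * P1 * P2 / D ^ B * q ^ K) := by
  have ne : ∀ e : ℤ, q ^ e ≠ 0 := fun e => zpow_ne_zero e hq
  have hPn : (q ^ (-en) * Pn) ^ E = q ^ (-(en * E)) * Pn ^ E := by
    rw [mul_pow, ← zpow_natCast (q ^ (-en)) E, ← zpow_mul]; ring_nf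
  have hDp : (q ^ (-e3) * D) ^ B = q ^ (-(e3 * B)) * D ^ B := by
    rw [mul_pow, ← zpow_natCast (q ^ (-e3)) B, ← zpow_mul]; ring_nf
  have hR : R = -(en * E) - e0 - e1 - e2 + e3 * B - K - K := by linarith
  rw [hPn, hDp, hR]
  simp only [zpow_add₀ hq, zpow_sub₀ hq, zpow_neg]
  field_simp

lemma alg (q c0 P1 P2 D Pn : ℂ) (hq : q ≠ 0) (B E nn m : ℕ)
    (hBE : Even B) (hEE : Even E)
    (e0 e1 e2 e3 en K R : ℤ)
    (hexp : R + K = -en * E - e0 - e1 - e2 + e3 * B - K) :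
    ((-1) ^ nn * q ^ (-en) * Pn) ^ E *
      (-q ^ (-e0) * c0 * ((-1) ^ m * q ^ (-e1) * P1) * ((-1) ^ m * q ^ (-e2) * P2) /
        ((-1) ^ (nn + 1) * q ^ (-e3) * D) ^ B * q ^ (-K))
    = -q ^ R * Pn ^ E * (c0 * P1 * P2 / D ^ B * q ^ K) := by
  have hs1 : ((-1 : ℂ) ^ nn * q ^ (-en) * Pn) ^ E = (q ^ (-en) * Pn) ^ E := by
    rw [mul_assoc, mul_pow, ← pow_mul, Even.neg_one_pow (hEE.mul_left nn), one_mul]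
  have hs2 : ((-1 : ℂ) ^ (nn + 1) * q ^ (-e3) * D) ^ B = (q ^ (-e3) * D) ^ B := by
    rw [mul_assoc, mul_pow, ← pow_mul, Even.neg_one_pow (hBE.mul_left (nn + 1)), one_mul]
  have h3 : ((-1 : ℂ) ^ m) * ((-1 : ℂ) ^ m) = 1 := by
    rw [← pow_add]; exact Even.neg_one_pow ⟨m, rfl⟩
  have step : ((-1) ^ nn * q ^ (-en) * Pn) ^ E *
      (-q ^ (-e0) * c0 * ((-1) ^ m * q ^ (-e1) * P1) * ((-1) ^ m * q ^ (-e2) * P2) /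
        ((-1) ^ (nn + 1) * q ^ (-e3) * D) ^ B * q ^ (-K))
      = (q ^ (-en) * Pn) ^ E *
      (-(q ^ (-e0) * c0) * (q ^ (-e1) * P1) * (q ^ (-e2) * P2) /
        (q ^ (-e3) * D) ^ B * q ^ (-K)) := by
    rw [hs1, hs2]
    linear_combination (-( (q ^ (-en) * Pn) ^ E * (q ^ (-e0) * c0) * (q ^ (-e1) * P1) *
      (q ^ (-e2) * P2) / (q ^ (-e3) * D) ^ B * q ^ (-K))) * h3
  rw [step]
  exact alg0 q c0 P1 P2 D Pn hq B E e0 e1 e2 e3 en K R hexp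

lemma key (A r n k s : ℕ) (hA : A = 2 * s) (hr : 1 ≤ r) (hrs : r < s) (hn : 1 ≤ n)
    (q : ℂ) (hq0 : q ≠ 0) :
    (∏ i ∈ Finset.range n, (1 - q⁻¹ ^ (i + 1))) ^ (A - 2 * r) *
      ((1 - q⁻¹ ^ (2 * (k + 1) + n)) *
        (∏ i ∈ Finset.range (r * n), (1 - q⁻¹ ^ (((k : ℤ) + 1) - r * n + i))) *
        (∏ i ∈ Finset.range (r * n), (1 - q⁻¹ ^ (k + 1 + n + 1 + i))) /
        (∏ i ∈ Finset.range (n + 1), (1 - q⁻¹ ^ (k + 1 + i))) ^ A *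
        q⁻¹ ^ ((k + 1) * ((A - 2 * r) * n / 2 + A / 2 - 1)))
    = -q ^ (n * (r - 1)) * (∏ i ∈ Finset.range n, (1 - q ^ (i + 1))) ^ (A - 2 * r) *
      ((1 - q ^ (2 * (k + 1) + n)) *
        (∏ i ∈ Finset.range (r * n), (1 - q ^ (((k : ℤ) + 1) - r * n + i))) *
        (∏ i ∈ Finset.range (r * n), (1 - q ^ (k + 1 + n + 1 + i))) /
        (∏ i ∈ Finset.range (n + 1), (1 - q ^ (k + 1 + i))) ^ A *
        q ^ ((k + 1) * ((A - 2 * r) * n / 2 + A / 2 - 1))) := by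
  subst hA
  have hs1 : 1 ≤ s := by omega
  have hM : (2 * s - 2 * r) * n / 2 + 2 * s / 2 - 1 = (s - r) * n + (s - 1) := by
    have e1 : 2 * s - 2 * r = 2 * (s - r) := by omega
    rw [e1, mul_assoc, Nat.mul_div_cancel_left _ (by norm_num : 0 < 2),
      Nat.mul_div_cancel_left _ (by norm_num : 0 < 2)]
    generalize (s - r) * n = a
    omega
  rw [hM]
  rw [prod_flipN q hq0 n (fun i => i + 1),
    flipN q hq0 (2 * (k + 1) + n),
    prod_flipZ q hq0 (r * n) (fun i => ((k : ℤ) + 1) - r * n + i),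
    prod_flipN q hq0 (r * n) (fun i => k + 1 + n + 1 + i),
    prod_flipN q hq0 (n + 1) (fun i => k + 1 + i),
    show (q⁻¹ : ℂ) ^ ((k + 1) * ((s - r) * n + (s - 1)))
        = q ^ (-(((k + 1) * ((s - r) * n + (s - 1)) : ℕ) : ℤ)) from by
      rw [inv_pow, ← zpow_natCast, ← zpow_neg],
    ← zpow_natCast q (n * (r - 1)), ← zpow_natCast q ((k + 1) * ((s - r) * n + (s - 1)))]
  apply alg q _ _ _ _ _ hq0 (2 * s) (2 * s - 2 * r) n (r * n)
  · exact ⟨s, by omega⟩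
  · exact ⟨s - r, by omega⟩
  · -- exponent identity
    have hen : (∑ i ∈ Finset.range n, ((i + 1 : ℕ) : ℤ))
        = ∑ i ∈ Finset.range n, ((1 : ℤ) + i) := by
      refine Finset.sum_congr rfl fun i _ => by push_cast; ring
    have he2 : (∑ i ∈ Finset.range (r * n), ((k + 1 + n + 1 + i : ℕ) : ℤ))
        = ∑ i ∈ Finset.range (r * n), (((k : ℤ) + 1 + n + 1) + i) := by
      refine Finset.sum_congr rfl fun i _ => by push_cast; ring
    have he3 : (∑ i ∈ Finset.range (n + 1), ((k + 1 + i : ℕ) : ℤ))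
        = ∑ i ∈ Finset.range (n + 1), (((k : ℤ) + 1) + i) := by
      refine Finset.sum_congr rfl fun i _ => by push_cast; ring
    rw [hen, he2, he3]
    have hgn := gauss n 1
    have hg1 := gauss (r * n) (((k : ℤ) + 1) - (r : ℤ) * (n : ℤ))
    have hg2 := gauss (r * n) ((k : ℤ) + 1 + n + 1)
    have hg3 := gauss (n + 1) ((k : ℤ) + 1)
    push_cast at hgn hg1 hg2 hg3 ⊢
    rw [Nat.cast_sub hr, Nat.cast_sub hrs.le, Nat.cast_sub hs1,
      Nat.cast_sub (show 2 * r ≤ 2 * s by omega)]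
    push_cast
    refine mul_left_cancel₀ (two_ne_zero) ?_
    linear_combination (2 * ((s : ℤ) - r)) * hgn + hg1 + hg2 - (2 * (s : ℤ)) * hg3

/-- `S̃_n(1/q) = −q^{n(r−1)} S̃_n(q)` for `|q| ≠ 1`. -/
theorem stmt19 (A r n : ℕ) (hA : Even A) (hr : 1 ≤ r) (hAr : 2 * r < A) (hn : 1 ≤ n)
    (q : ℂ) (hq0 : q ≠ 0) (hq1 : ‖q‖ ≠ 1) :
    St19 A r n q⁻¹ = -q ^ (n * (r - 1)) * St19 A r n q := by
  obtain ⟨s, hs⟩ := hA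
  have hA2 : A = 2 * s := by omega
  have hrs : r < s := by omega
  simp only [St19]
  conv_lhs => rw [← tsum_mul_left]
  conv_rhs => rw [← mul_assoc, ← tsum_mul_left]
  exact tsum_congr fun k => key A r n k s hA2 hr hrs hn q hq0
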